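/- Let L ∈ GL(m, ℝ) have all eigenvalues of modulus less than 1 and ε > 0. For n ∈ S^{m−1} define x(n) := ε · Σ_{k=0}^∞ L^k (L_⊥^{-k}(n)), where L_⊥(n) = (L^T)^{-1} n / ‖(L^T)^{-1} n‖. Then this series converges absolutely for every n ∈ S^{m−1}, and n ↦ x(n) is continuous. -/

import Mathlib

noncomputable section

/-- All (complex) eigenvalues of the real matrix `M` have modulus less than 1. -/
def specLt1 {m : ℕ} (M : Matrix (Fin m) (Fin m) ℝ) : Prop :=
  ∀ μ ∈ spectrum ℂ (M.map Complex.ofReal), ‖μ‖ < 1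

/-- The inverse `L_⊥⁻¹(n) = Lᵀ n / ‖Lᵀ n‖` of the induced map on unit normal vectors. -/
def LperpInv {m : ℕ} (M : Matrix (Fin m) (Fin m) ℝ) (n : EuclideanSpace ℝ (Fin m)) :
    EuclideanSpace ℝ (Fin m) :=
  ‖Matrix.toEuclideanLin M.transpose n‖⁻¹ • Matrix.toEuclideanLin M.transpose n

open scoped Matrix.Norms.L2Operator ENNReal NNReal
open Matrix

namespace Stmt16Aux

variable {m : ℕ}

lemma l2_bound (A' : Matrix (Fin m) (Fin m) ℂ) (x : EuclideanSpace ℂ (Fin m)) :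
    ‖Matrix.toEuclideanLin A' x‖ ≤ ‖A'‖ * ‖x‖ := by
  have h : Matrix.toEuclideanLin A' x = Matrix.toEuclideanCLM (𝕜 := ℂ) A' x := by
    rw [← Matrix.coe_toEuclideanCLM_eq_toEuclideanLin]; rfl
  rw [h, Matrix.cstar_norm_def]
  exact (Matrix.toEuclideanCLM (𝕜 := ℂ) A').le_opNorm x

lemma norm_toEuclideanLin_le (B : Matrix (Fin m) (Fin m) ℝ) (w : EuclideanSpace ℝ (Fin m)) :
    ‖Matrix.toEuclideanLin B w‖ ≤ ‖B.map Complex.ofReal‖ * ‖w‖ := by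
  classical
  set wc : EuclideanSpace ℂ (Fin m) :=
    (WithLp.equiv 2 (Fin m → ℂ)).symm (fun i => (w i : ℂ)) with hwc
  have hnw : ‖wc‖ = ‖w‖ := by
    simp only [EuclideanSpace.norm_eq]
    congr 1
    refine Finset.sum_congr rfl fun i _ => ?_
    simp [hwc]
  have heq : ‖Matrix.toEuclideanLin (B.map Complex.ofReal) wc‖ = ‖Matrix.toEuclideanLin B w‖ := by
    rw [Matrix.toEuclideanLin_apply, Matrix.toEuclideanLin_apply]
    simp only [EuclideanSpace.norm_eq]
    congr 1
    refine Finset.sum_congr rfl fun i _ => ?_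
    congr 1
    have hcomp : ((B.map Complex.ofReal) *ᵥ (WithLp.equiv 2 (Fin m → ℂ) wc)) i
        = (((B *ᵥ (WithLp.equiv 2 (Fin m → ℝ) w)) i : ℝ) : ℂ) := by
      simp only [Matrix.mulVec, dotProduct, Matrix.map_apply, hwc, Equiv.apply_symm_apply]
      push_cast
      rfl
    rw [show (B.map Complex.ofReal *ᵥ wc.ofLp) i = (((B *ᵥ w.ofLp) i : ℝ) : ℂ) from hcomp]
    simp
  calc ‖Matrix.toEuclideanLin B w‖ = ‖Matrix.toEuclideanLin (B.map Complex.ofReal) wc‖ := heq.symm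
    _ ≤ ‖B.map Complex.ofReal‖ * ‖wc‖ := l2_bound _ _
    _ = ‖B.map Complex.ofReal‖ * ‖w‖ := by rw [hnw]

lemma iterate_toEuclideanLin (B : Matrix (Fin m) (Fin m) ℝ) (k : ℕ)
    (w : EuclideanSpace ℝ (Fin m)) :
    (fun v => Matrix.toEuclideanLin B v)^[k] w = Matrix.toEuclideanLin (B ^ k) w := by
  induction k generalizing w with
  | zero => simp [Matrix.toEuclideanLin_apply]
  | succ k ih =>
    rw [Function.iterate_succ_apply, ih, Matrix.toEuclideanLin_apply,
      Matrix.toEuclideanLin_apply, Matrix.toEuclideanLin_apply, WithLp.ofLp_toLp,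
      Matrix.mulVec_mulVec, ← pow_succ]

lemma norm_LperpInv {M : Matrix (Fin m) (Fin m) ℝ} (hdet : IsUnit M.det)
    {v : EuclideanSpace ℝ (Fin m)} (hv : v ≠ 0) : ‖LperpInv M v‖ = 1 := by
  have hMt : IsUnit M.transpose := by
    rw [Matrix.isUnit_iff_isUnit_det, Matrix.det_transpose]; exact hdet
  have hu : Matrix.toEuclideanLin M.transpose v ≠ 0 := by
    intro h
    apply hv
    have hinj : Function.Injective (M.transpose).mulVec :=
      Matrix.mulVec_injective_iff_isUnit.mpr hMt
    have h0 : M.transpose *ᵥ (WithLp.equiv 2 (Fin m → ℝ) v) = 0 := by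
      have := congrArg (WithLp.equiv 2 (Fin m → ℝ)) h
      rw [Matrix.toEuclideanLin_apply] at this
      simpa using this
    have : (WithLp.equiv 2 (Fin m → ℝ)) v = 0 := hinj (by simpa using h0)
    simpa using congrArg (WithLp.equiv 2 (Fin m → ℝ)).symm this
  have hnu : ‖Matrix.toEuclideanLin M.transpose v‖ ≠ 0 := norm_ne_zero_iff.mpr hu
  rw [LperpInv, norm_smul, norm_inv, norm_norm, inv_mul_cancel₀ hnu]

lemma contOn_LperpInv {M : Matrix (Fin m) (Fin m) ℝ} (hdet : IsUnit M.det) :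
    ContinuousOn (LperpInv M) {v : EuclideanSpace ℝ (Fin m) | v ≠ 0} := by
  have hg : Continuous fun v : EuclideanSpace ℝ (Fin m) => Matrix.toEuclideanLin M.transpose v :=
    (Matrix.toEuclideanLin M.transpose).continuous_of_finiteDimensional
  have hne : ∀ v ∈ {v : EuclideanSpace ℝ (Fin m) | v ≠ 0},
      ‖Matrix.toEuclideanLin M.transpose v‖ ≠ 0 := by
    intro v hv
    have := norm_LperpInv hdet hv
    intro h0
    rw [LperpInv, h0] at this
    simp at this
  exact (((hg.norm).continuousOn.inv₀ hne).smul hg.continuousOn)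

lemma iter_LperpInv {M : Matrix (Fin m) (Fin m) ℝ} (hdet : IsUnit M.det) (k : ℕ) :
    (∀ v : EuclideanSpace ℝ (Fin m), ‖v‖ = 1 → ‖(LperpInv M)^[k] v‖ = 1) ∧
      ContinuousOn ((LperpInv M)^[k]) (Metric.sphere (0 : EuclideanSpace ℝ (Fin m)) 1) := by
  induction k with
  | zero => exact ⟨fun v hv => by simpa using hv, by simpa using continuousOn_id⟩
  | succ k ih =>
    constructor
    · intro v hv
      rw [Function.iterate_succ_apply']
      have h1 : ‖(LperpInv M)^[k] v‖ = 1 := ih.1 v hv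
      refine norm_LperpInv hdet ?_
      intro h0
      rw [h0] at h1; simp at h1
    · rw [Function.iterate_succ']
      refine (contOn_LperpInv hdet).comp ih.2 ?_
      intro v hv
      have : ‖(LperpInv M)^[k] v‖ = 1 := ih.1 v (by simpa using hv)
      simp only [Set.mem_setOf_eq]
      intro h0
      rw [h0] at this; simp at this

end Stmt16Aux

open Stmt16Aux

/-- The series `x(n) = ε ∑ₖ L^k (L_⊥^{-k}(n))` converges absolutely for every unit vector `n`,
and `n ↦ x(n)` is continuous on the unit sphere. -/
theorem stmt16 {m : ℕ} (M : Matrix (Fin m) (Fin m) ℝ) (hdet : IsUnit M.det)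
    (hspec : specLt1 M) (ε : ℝ) (hε : 0 < ε) :
    (∀ n : EuclideanSpace ℝ (Fin m), ‖n‖ = 1 →
      Summable fun k : ℕ =>
        ‖(fun v => Matrix.toEuclideanLin M v)^[k] ((LperpInv M)^[k] n)‖) ∧
    ContinuousOn
      (fun n : EuclideanSpace ℝ (Fin m) =>
        ε • ∑' k : ℕ, (fun v => Matrix.toEuclideanLin M v)^[k] ((LperpInv M)^[k] n))
      (Metric.sphere (0 : EuclideanSpace ℝ (Fin m)) 1) := by
  classical
  set A := M.map Complex.ofReal with hA
  have hsr : spectralRadius ℂ A < 1 := by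
    rcases Set.eq_empty_or_nonempty (spectrum ℂ A) with h | h
    · simp [spectralRadius, h]
    · refine spectrum.spectralRadius_lt_of_forall_lt_of_nonempty h (r := 1) ?_
      intro μ hμ
      have := hspec μ hμ
      exact_mod_cast this
  obtain ⟨r, hr0, hr1⟩ := ENNReal.lt_iff_exists_nnreal_btwn.mp hsr
  have hr1' : (r : ℝ) < 1 := by exact_mod_cast hr1
  have hgel := spectrum.pow_nnnorm_pow_one_div_tendsto_nhds_spectralRadius A
  have hev : ∀ᶠ k : ℕ in Filter.atTop,
      ((‖A ^ k‖₊ : ℝ≥0∞) ^ (1 / (k : ℝ))) < (r : ℝ≥0∞) :=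
    hgel.eventually_lt_const hr0
  have hbound : ∀ᶠ k : ℕ in Filter.atTop, ‖A ^ k‖ ≤ (r : ℝ) ^ k := by
    filter_upwards [hev, Filter.eventually_gt_atTop 0] with k hk hk0
    have hkR : (0 : ℝ) < (k : ℝ) := by exact_mod_cast hk0
    have h1 := ENNReal.rpow_lt_rpow hk hkR
    have hxk : ((‖A ^ k‖₊ : ℝ≥0∞) ^ (1 / (k : ℝ))) ^ (k : ℝ) = (‖A ^ k‖₊ : ℝ≥0∞) := by
      rw [← ENNReal.rpow_mul, one_div, inv_mul_cancel₀ (ne_of_gt hkR), ENNReal.rpow_one]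
    have hrk : ((r : ℝ≥0∞)) ^ (k : ℝ) = ((r ^ k : ℝ≥0) : ℝ≥0∞) := by
      rw [ENNReal.rpow_natCast, ENNReal.coe_pow]
    rw [hxk, hrk] at h1
    have h2 : ‖A ^ k‖₊ < r ^ k := by exact_mod_cast h1
    calc ‖A ^ k‖ = ((‖A ^ k‖₊ : ℝ)) := rfl
      _ ≤ ((r ^ k : ℝ≥0) : ℝ) := le_of_lt (by exact_mod_cast h2)
      _ = (r : ℝ) ^ k := by push_cast; ring
  have hsumA : Summable (fun k : ℕ => ‖A ^ k‖) := by
    have hgeo : Summable (fun k : ℕ => (r : ℝ) ^ k) :=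
      summable_geometric_of_lt_one r.coe_nonneg hr1'
    refine Summable.of_norm_bounded_eventually_nat hgeo ?_
    filter_upwards [hbound] with k hk
    simpa using hk
  have hpowmap : ∀ k : ℕ, (M ^ k).map Complex.ofReal = A ^ k := by
    intro k
    have := map_pow (Complex.ofRealHom.mapMatrix : Matrix (Fin m) (Fin m) ℝ →+* Matrix (Fin m) (Fin m) ℂ) M k
    exact this
  have hkey : ∀ (k : ℕ) (nv : EuclideanSpace ℝ (Fin m)), ‖nv‖ = 1 →
      ‖(fun v => Matrix.toEuclideanLin M v)^[k] ((LperpInv M)^[k] nv)‖ ≤ ‖A ^ k‖ := by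
    intro k nv hnv
    rw [iterate_toEuclideanLin]
    have hw : ‖(LperpInv M)^[k] nv‖ = 1 := (iter_LperpInv hdet k).1 nv hnv
    calc ‖Matrix.toEuclideanLin (M ^ k) ((LperpInv M)^[k] nv)‖
        ≤ ‖(M ^ k).map Complex.ofReal‖ * ‖(LperpInv M)^[k] nv‖ := norm_toEuclideanLin_le _ _
      _ = ‖A ^ k‖ := by rw [hpowmap, hw, mul_one]
  constructor
  · intro n hn
    exact Summable.of_nonneg_of_le (fun k => norm_nonneg _) (fun k => hkey k n hn) hsumA
  · refine ContinuousOn.const_smul ?_ ε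
    refine continuousOn_tsum (fun k => ?_) hsumA (fun k x hx => hkey k x (by
      simpa using mem_sphere_zero_iff_norm.mp hx))
    have hLcont : Continuous fun v : EuclideanSpace ℝ (Fin m) => Matrix.toEuclideanLin M v :=
      (Matrix.toEuclideanLin M).continuous_of_finiteDimensional
    exact (hLcont.iterate k).comp_continuousOn (iter_LperpInv hdet k).2
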